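/- Let Y_1, Y_2, … be mutually independent real-valued random variables, S_k = Y_1 + ⋯ + Y_k, and let A = {h ≥ 0 : sup_{k≥1} E[e^{h S_k}] ≤ 1} (note 0 ∈ A). If A is bounded above and L(S_•) denotes its supremum, then for every u > 0: P[sup_{k≥1} S_k > u] ≤ e^{−L(S_•) u}. -/

import Mathlib

open MeasureTheory ProbabilityTheory Finset Real

def psumAux (k m : ℕ) (x : (j : Finset.range (k+1)) → ℝ) : ℝ :=
  ∑ j ∈ Finset.range m, if hj : j ∈ Finset.range (k+1) then x ⟨j, hj⟩ else 0

lemma psumAux_meas (k m : ℕ) : Measurable (psumAux k m) := by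
  apply Finset.measurable_sum
  intro j _
  by_cases hj : j ∈ Finset.range (k+1)
  · simpa [hj] using measurable_pi_apply (⟨j, hj⟩ : Finset.range (k+1))
  · simp [hj]

lemma psumAux_apply {Ω : Type*} (Y : ℕ → Ω → ℝ) (k m : ℕ) (hm : m ≤ k+1) (ω : Ω) :
    psumAux k m (fun j => Y j ω) = ∑ j ∈ Finset.range m, Y j ω := by
  refine Finset.sum_congr rfl fun j hj => ?_
  rw [dif_pos]
  simp only [Finset.mem_range] at *
  omega

lemma aux_indep {Ω : Type*} [MeasurableSpace Ω] (P : Measure Ω) [IsProbabilityMeasure P]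
    (Y : ℕ → Ω → ℝ) (hmeas : ∀ i, Measurable (Y i))
    (hindep : iIndepFun Y P)
    (k n : ℕ) (F : ((j : Finset.range (k+1)) → ℝ) → ENNReal) (hF : Measurable F) (c : ℝ) :
    ∫⁻ ω, F (fun j => Y j ω) *
        ENNReal.ofReal (Real.exp (c * ∑ j ∈ Finset.Ico (k+1) (n+1), Y j ω)) ∂P
      = (∫⁻ ω, F (fun j => Y j ω) ∂P) *
        ∫⁻ ω, ENNReal.ofReal (Real.exp (c * ∑ j ∈ Finset.Ico (k+1) (n+1), Y j ω)) ∂P := by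
  have hG : Measurable (fun x : ((j : Finset.Ico (k+1) (n+1)) → ℝ) =>
      ENNReal.ofReal (Real.exp (c * ∑ j, x j))) := by
    apply ENNReal.measurable_ofReal.comp
    exact Real.measurable_exp.comp (measurable_const.mul (Finset.measurable_sum _
      (fun j _ => measurable_pi_apply j)))
  have hdisj : Disjoint (Finset.range (k+1)) (Finset.Ico (k+1) (n+1)) := by
    simp only [Finset.disjoint_left, Finset.mem_range, Finset.mem_Ico]
    omega
  have hIF : IndepFun (fun ω => F (fun j => Y j ω))
      (fun ω => ENNReal.ofReal (Real.exp (c * ∑ j : Finset.Ico (k+1) (n+1), Y j ω))) P :=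
    (hindep.indepFun_finset (Finset.range (k+1)) (Finset.Ico (k+1) (n+1))
      hdisj hmeas).comp hF hG
  have hGsum : ∀ ω : Ω, (∑ j : Finset.Ico (k+1) (n+1), Y j ω)
      = ∑ j ∈ Finset.Ico (k+1) (n+1), Y j ω := fun ω =>
    Finset.sum_coe_sort (Finset.Ico (k+1) (n+1)) (fun j => Y j ω)
  simp only [hGsum] at hIF
  have hmf : Measurable (fun ω => F (fun j => Y j ω)) :=
    hF.comp (measurable_pi_lambda _ fun j => hmeas j)
  have hmg : Measurable (fun ω =>
      ENNReal.ofReal (Real.exp (c * ∑ j ∈ Finset.Ico (k+1) (n+1), Y j ω))) := by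
    apply ENNReal.measurable_ofReal.comp
    exact Real.measurable_exp.comp (measurable_const.mul (Finset.measurable_sum _
      (fun j _ => hmeas j)))
  exact lintegral_mul_eq_lintegral_mul_lintegral_of_indepFun'' (μ := P)
    hmf.aemeasurable hmg.aemeasurable hIF

theorem stmt3 {Ω : Type*} [MeasurableSpace Ω] (P : Measure Ω) [IsProbabilityMeasure P]
    (Y : ℕ → Ω → ℝ)
    (hmeas : ∀ i, Measurable (Y i))
    (hindep : iIndepFun Y P)
    (S : ℕ → Ω → ℝ) (hS : ∀ k ω, S k ω = ∑ j ∈ Finset.range k, Y j ω)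
    (A : Set ℝ)
    (hA : A = {h : ℝ | 0 ≤ h ∧
      (⨆ k : ℕ, ∫⁻ ω, ENNReal.ofReal (Real.exp (h * S (k + 1) ω)) ∂P) ≤ 1})
    (hbdd : BddAbove A)
    (u : ℝ) (hu : 0 < u) :
    P (⋃ k : ℕ, {ω | u < S (k + 1) ω}) ≤ ENNReal.ofReal (Real.exp (-(sSup A) * u)) := by
  classical
  have hSmeas : ∀ m, Measurable (S m) := by
    intro m
    have hfe : S m = fun ω => ∑ j ∈ Finset.range m, Y j ω := funext fun ω => hS m ω
    rw [hfe]
    exact Finset.measurable_sum _ fun j _ => hmeas j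
  have hA0 : (0:ℝ) ∈ A := by
    rw [hA]
    refine ⟨le_rfl, iSup_le fun k => ?_⟩
    simp [Real.exp_zero]
  -- main bound for each h ∈ A
  have main : ∀ h ∈ A, P (⋃ k : ℕ, {ω | u < S (k + 1) ω})
      ≤ ENNReal.ofReal (Real.exp (-h * u)) := by
    intro h hh
    rw [hA] at hh
    obtain ⟨hh0, hhsup⟩ := hh
    set B : ℕ → Set Ω := fun k => {ω | u < S (k+1) ω ∧ ∀ j < k, S (j+1) ω ≤ u} with hB
    have hBmeas : ∀ k, MeasurableSet (B k) := by
      intro k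
      have he : B k = {ω | u < S (k+1) ω} ∩ ⋂ j ∈ Finset.range k, {ω | S (j+1) ω ≤ u} := by
        ext ω; simp [hB, Finset.mem_range]
      rw [he]
      exact (measurableSet_lt measurable_const (hSmeas _)).inter
        (MeasurableSet.biInter (Set.to_countable _)
          fun j _ => measurableSet_le (hSmeas _) measurable_const)
    set E : ℕ → ENNReal :=
      fun n => ∫⁻ ω, ENNReal.ofReal (Real.exp (h * S (n+1) ω)) ∂P with hE
    have hintmeas : ∀ n, Measurable (fun ω => ENNReal.ofReal (Real.exp (h * S (n+1) ω))) :=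
      fun n => ENNReal.measurable_ofReal.comp
        (Real.measurable_exp.comp (measurable_const.mul (hSmeas _)))
    have hE1 : ∀ n, E n ≤ 1 := fun n =>
      le_trans (le_iSup (fun k => ∫⁻ ω, ENNReal.ofReal (Real.exp (h * S (k+1) ω)) ∂P) n) hhsup
    have hEtop : ∀ n, E n ≠ ⊤ := fun n => ne_top_of_le_ne_top ENNReal.one_ne_top (hE1 n)
    have hEpos : ∀ n, E n ≠ 0 := by
      intro n h0
      have hae := (lintegral_eq_zero_iff (hintmeas n)).mp h0
      have h2 : P {ω | ¬ (ENNReal.ofReal (Real.exp (h * S (n+1) ω)) = 0)} = 0 := by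
        simpa [Filter.EventuallyEq, ae_iff] using hae
      have h3 : {ω | ¬ (ENNReal.ofReal (Real.exp (h * S (n+1) ω)) = 0)} = Set.univ := by
        ext ω; simp [ENNReal.ofReal_eq_zero, not_le, Real.exp_pos]
      rw [h3, measure_univ] at h2
      exact one_ne_zero h2
    set Gq : ℕ → ℕ → ENNReal := fun k n =>
      ∫⁻ ω, ENNReal.ofReal (Real.exp (h * ∑ j ∈ Finset.Ico (k+1) (n+1), Y j ω)) ∂P with hGq
    have hsplitS : ∀ k n, k ≤ n → ∀ ω,
        S (n+1) ω = S (k+1) ω + ∑ j ∈ Finset.Ico (k+1) (n+1), Y j ω := by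
      intro k n hkn ω
      rw [hS, hS, Finset.range_eq_Ico, Finset.range_eq_Ico]
      exact (Finset.sum_Ico_consecutive _ (Nat.zero_le _) (by omega)).symm
    have hsplit : ∀ k n, k ≤ n → E n = E k * Gq k n := by
      intro k n hkn
      have h1 := aux_indep P Y hmeas hindep k n
        (fun x => ENNReal.ofReal (Real.exp (h * psumAux k (k+1) x)))
        (ENNReal.measurable_ofReal.comp
          (Real.measurable_exp.comp (measurable_const.mul (psumAux_meas k (k+1))))) h
      have h2 : ∀ ω : Ω, ENNReal.ofReal (Real.exp (h * psumAux k (k+1) (fun j => Y j ω)))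
          = ENNReal.ofReal (Real.exp (h * S (k+1) ω)) := by
        intro ω; rw [psumAux_apply Y k (k+1) le_rfl, ← hS]
      simp only [h2] at h1
      have h3 : ∀ ω : Ω, ENNReal.ofReal (Real.exp (h * S (k+1) ω)) *
          ENNReal.ofReal (Real.exp (h * ∑ j ∈ Finset.Ico (k+1) (n+1), Y j ω))
          = ENNReal.ofReal (Real.exp (h * S (n+1) ω)) := by
        intro ω
        rw [← ENNReal.ofReal_mul (Real.exp_nonneg _), ← Real.exp_add,
          ← mul_add, ← hsplitS k n hkn ω]
      simp only [h3] at h1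
      exact h1
    -- key identity with indicator
    have hkey : ∀ k n, k ≤ n →
        (∫⁻ ω, (B k).indicator (fun ω => ENNReal.ofReal (Real.exp (h * S (n+1) ω))) ω ∂P)
          = (∫⁻ ω, (B k).indicator
              (fun ω => ENNReal.ofReal (Real.exp (h * S (k+1) ω))) ω ∂P) * Gq k n := by
      intro k n hkn
      set Fk : ((j : Finset.range (k+1)) → ℝ) → ENNReal := fun x =>
        Set.indicator {x | u < psumAux k (k+1) x ∧ ∀ j < k, psumAux k (j+1) x ≤ u}
          (fun x => ENNReal.ofReal (Real.exp (h * psumAux k (k+1) x))) x with hFk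
      have hFmeas : Measurable Fk := by
        apply Measurable.indicator
        · exact ENNReal.measurable_ofReal.comp
            (Real.measurable_exp.comp (measurable_const.mul (psumAux_meas k (k+1))))
        · have he : {x | u < psumAux k (k+1) x ∧ ∀ j < k, psumAux k (j+1) x ≤ u}
              = {x | u < psumAux k (k+1) x} ∩
                ⋂ j ∈ Finset.range k, {x | psumAux k (j+1) x ≤ u} := by
            ext x; simp [Finset.mem_range]
          rw [he]
          exact (measurableSet_lt measurable_const (psumAux_meas _ _)).inter
            (MeasurableSet.biInter (Set.to_countable _)
              fun j _ => measurableSet_le (psumAux_meas _ _) measurable_const)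
      have h1 := aux_indep P Y hmeas hindep k n Fk hFmeas h
      have h2 : ∀ ω : Ω, Fk (fun j => Y j ω)
          = (B k).indicator (fun ω => ENNReal.ofReal (Real.exp (h * S (k+1) ω))) ω := by
        intro ω
        have hp : ∀ m, m ≤ k+1 → psumAux k m (fun j => Y j ω) = S m ω := fun m hm => by
          rw [psumAux_apply Y k m hm, ← hS]
        have hiff : ((fun j : Finset.range (k+1) => Y j ω) ∈
            {x | u < psumAux k (k+1) x ∧ ∀ j < k, psumAux k (j+1) x ≤ u}) ↔ ω ∈ B k := by
          simp only [Set.mem_setOf_eq, hB]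
          constructor
          · rintro ⟨c1, c2⟩
            refine ⟨by rwa [hp _ le_rfl] at c1, fun j hj => ?_⟩
            have := c2 j hj
            rwa [hp _ (by omega)] at this
          · rintro ⟨c1, c2⟩
            refine ⟨by rwa [hp _ le_rfl], fun j hj => ?_⟩
            rw [hp _ (by omega)]
            exact c2 j hj
        rw [hFk]
        simp only [Set.indicator_apply]
        by_cases hmem : ω ∈ B k
        · rw [if_pos (hiff.mpr hmem), if_pos hmem, hp _ le_rfl]
        · rw [if_neg (fun c => hmem (hiff.mp c)), if_neg hmem]
      simp only [h2] at h1
      have h3 : ∀ ω : Ω,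
          (B k).indicator (fun ω => ENNReal.ofReal (Real.exp (h * S (k+1) ω))) ω *
            ENNReal.ofReal (Real.exp (h * ∑ j ∈ Finset.Ico (k+1) (n+1), Y j ω))
          = (B k).indicator (fun ω => ENNReal.ofReal (Real.exp (h * S (n+1) ω))) ω := by
        intro ω
        by_cases hmem : ω ∈ B k
        · rw [Set.indicator_of_mem hmem, Set.indicator_of_mem hmem,
            ← ENNReal.ofReal_mul (Real.exp_nonneg _), ← Real.exp_add, ← mul_add,
            ← hsplitS k n hkn ω]
        · rw [Set.indicator_of_notMem hmem, Set.indicator_of_notMem hmem, zero_mul]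
      simp only [h3] at h1
      exact h1
    set a : ℕ → ENNReal := fun k =>
      ∫⁻ ω, (B k).indicator (fun ω => ENNReal.ofReal (Real.exp (h * S (k+1) ω))) ω ∂P with ha
    have hdisjB : ∀ k l, k < l → Disjoint (B k) (B l) := by
      intro k l hkl
      rw [Set.disjoint_left]
      intro ω hωk hωl
      simp only [hB, Set.mem_setOf_eq] at hωk hωl
      exact absurd hωk.1 (not_lt.mpr (hωl.2 k hkl))
    have hsum_le : ∀ n, ∑ k ∈ Finset.range (n+1),
        (∫⁻ ω, (B k).indicator (fun ω => ENNReal.ofReal (Real.exp (h * S (n+1) ω))) ω ∂P)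
        ≤ E n := by
      intro n
      have h1 : ∀ k : ℕ,
          (∫⁻ ω, (B k).indicator (fun ω => ENNReal.ofReal (Real.exp (h * S (n+1) ω))) ω ∂P)
          = ∫⁻ ω in B k, ENNReal.ofReal (Real.exp (h * S (n+1) ω)) ∂P :=
        fun k => lintegral_indicator (hBmeas k) _
      simp only [h1]
      rw [← lintegral_biUnion_finset (fun k _ l _ hkl => by
          rcases lt_or_gt_of_ne hkl with hc | hc
          · exact hdisjB k l hc
          · exact (hdisjB l k hc).symm)
        (fun k _ => hBmeas k)]
      exact setLIntegral_le_lintegral _ _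
    have hsum_a : ∀ n, ∑ k ∈ Finset.range (n+1), a k ≤ 1 := by
      intro n
      have hEG : ∀ k, k ≤ n → E n ≤ Gq k n := by
        intro k hk
        rw [hsplit k n hk]
        calc E k * Gq k n ≤ 1 * Gq k n := mul_le_mul_left (hE1 k) _
          _ = Gq k n := one_mul _
      have h1 : (∑ k ∈ Finset.range (n+1), a k) * E n ≤ 1 * E n := by
        rw [Finset.sum_mul, one_mul]
        calc ∑ k ∈ Finset.range (n+1), a k * E n
            ≤ ∑ k ∈ Finset.range (n+1), a k * Gq k n :=
              Finset.sum_le_sum fun k hk =>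
                mul_le_mul_right (hEG k (by simpa using Nat.lt_succ_iff.mp (Finset.mem_range.mp hk))) _
          _ = ∑ k ∈ Finset.range (n+1),
              (∫⁻ ω, (B k).indicator
                (fun ω => ENNReal.ofReal (Real.exp (h * S (n+1) ω))) ω ∂P) :=
              Finset.sum_congr rfl fun k hk =>
                (hkey k n (Nat.lt_succ_iff.mp (Finset.mem_range.mp hk))).symm
          _ ≤ E n := hsum_le n
      exact (ENNReal.mul_le_mul_iff_left (hEpos n) (hEtop n)).mp h1
    have htsum : ∑' k, a k ≤ 1 := by
      rw [ENNReal.tsum_eq_iSup_nat]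
      refine iSup_le fun i => ?_
      calc ∑ k ∈ Finset.range i, a k ≤ ∑ k ∈ Finset.range (i+1), a k :=
            Finset.sum_le_sum_of_subset (Finset.range_subset_range.mpr (Nat.le_succ i))
        _ ≤ 1 := hsum_a i
    have hlow : ∀ k, ENNReal.ofReal (Real.exp (h*u)) * P (B k) ≤ a k := by
      intro k
      rw [ha, ← lintegral_indicator_const (hBmeas k)]
      refine lintegral_mono fun ω => ?_
      by_cases hmem : ω ∈ B k
      · rw [Set.indicator_of_mem hmem, Set.indicator_of_mem hmem]
        apply ENNReal.ofReal_le_ofReal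
        apply Real.exp_le_exp.mpr
        have h1 : u < S (k+1) ω := by
          have := hmem
          simp only [hB, Set.mem_setOf_eq] at this
          exact this.1
        exact mul_le_mul_of_nonneg_left h1.le hh0
      · rw [Set.indicator_of_notMem hmem, Set.indicator_of_notMem hmem]
    have hUsub : (⋃ k : ℕ, {ω | u < S (k + 1) ω}) ⊆ ⋃ k, B k := by
      intro ω hω
      simp only [Set.mem_iUnion, Set.mem_setOf_eq] at hω ⊢
      obtain ⟨k, hk⟩ := hω
      have hex : ∃ m, u < S (m+1) ω := ⟨k, hk⟩
      refine ⟨Nat.find hex, ?_⟩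
      simp only [hB, Set.mem_setOf_eq]
      exact ⟨Nat.find_spec hex, fun j hj => not_lt.mp (Nat.find_min hex hj)⟩
    have h5 : ENNReal.ofReal (Real.exp (h*u)) * P (⋃ k : ℕ, {ω | u < S (k + 1) ω}) ≤ 1 := by
      calc ENNReal.ofReal (Real.exp (h*u)) * P (⋃ k : ℕ, {ω | u < S (k + 1) ω})
          ≤ ENNReal.ofReal (Real.exp (h*u)) * ∑' k, P (B k) :=
            mul_le_mul_right (le_trans (measure_mono hUsub) (measure_iUnion_le B)) _
        _ = ∑' k, ENNReal.ofReal (Real.exp (h*u)) * P (B k) := ENNReal.tsum_mul_left.symm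
        _ ≤ ∑' k, a k := ENNReal.tsum_le_tsum hlow
        _ ≤ 1 := htsum
    have hprod : ENNReal.ofReal (Real.exp (-h*u)) * ENNReal.ofReal (Real.exp (h*u)) = 1 := by
      rw [← ENNReal.ofReal_mul (Real.exp_nonneg _), ← Real.exp_add]
      norm_num
    calc P (⋃ k : ℕ, {ω | u < S (k + 1) ω})
        = ENNReal.ofReal (Real.exp (-h*u)) *
          (ENNReal.ofReal (Real.exp (h*u)) * P (⋃ k : ℕ, {ω | u < S (k + 1) ω})) := by
          rw [← mul_assoc, hprod, one_mul]
      _ ≤ ENNReal.ofReal (Real.exp (-h*u)) * 1 := mul_le_mul_right h5 _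
      _ = ENNReal.ofReal (Real.exp (-h*u)) := mul_one _
  -- pass to the supremum
  have hAne : A.Nonempty := ⟨0, hA0⟩
  set L := sSup A with hL
  have htend : Filter.Tendsto (fun ε : ℝ => ENNReal.ofReal (Real.exp (-(L-ε)*u)))
      (nhdsWithin 0 (Set.Ioi 0)) (nhds (ENNReal.ofReal (Real.exp (-L*u)))) := by
    have hc : Continuous fun ε : ℝ => ENNReal.ofReal (Real.exp (-(L-ε)*u)) := by
      apply ENNReal.continuous_ofReal.comp
      apply Real.continuous_exp.comp
      continuity
    have := hc.tendsto 0
    simp only [sub_zero] at this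
    exact this.mono_left nhdsWithin_le_nhds
  refine ge_of_tendsto htend ?_
  filter_upwards [self_mem_nhdsWithin] with ε hε
  obtain ⟨h, hhA, hh⟩ := exists_lt_of_lt_csSup hAne (sub_lt_self L hε)
  refine le_trans (main h hhA) (ENNReal.ofReal_le_ofReal ?_)
  apply Real.exp_le_exp.mpr
  nlinarith
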